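/- arXiv:1310.1048 — 4 statements merged into one kernel-verified Lean document; each statement's English description precedes it below -/
import Mathlib

section
/- For all n ≥ 0, the largest real root of p_n equals 4cos²(π/(n+2)). -/
open Real Finset

noncomputable def p : ℕ → ℝ → ℝ
  | 0, x => x
  | 1, x => x * (x - 1)
  | (n+2), x => x * (p (n+1) x - p n x)

lemma key (θ : ℝ) : ∀ n : ℕ,
    Real.sin θ * p n (4 * Real.cos θ ^ 2) =
      (2 * Real.cos θ) ^ (n + 1) * Real.sin (((n : ℝ) + 2) * θ) := by
  intro n
  induction n using Nat.twoStepInduction with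
  | zero =>
      simp only [p, Nat.cast_zero]
      rw [show ((0:ℝ) + 2) * θ = 2 * θ by ring, Real.sin_two_mul]
      ring
  | one =>
      simp only [p]
      have h3 : Real.sin (((1 : ℕ) + 2 : ℝ) * θ) = 3 * Real.sin θ - 4 * Real.sin θ ^ 3 := by
        norm_num
        rw [show (3 : ℝ) * θ = 3 * θ by ring, Real.sin_three_mul]
      rw [h3]
      have hs : Real.sin θ ^ 2 = 1 - Real.cos θ ^ 2 := Real.sin_sq θ
      linear_combination 16 * Real.cos θ ^ 2 * Real.sin θ * hs
  | more m ih2 ih1 =>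
      simp only [p]
      have hrec : Real.sin (((m : ℝ) + 2 + 2) * θ) =
          2 * Real.cos θ * Real.sin (((m : ℝ) + 1 + 2) * θ) - Real.sin (((m : ℝ) + 2) * θ) := by
        have e1 : ((m : ℝ) + 2 + 2) * θ = ((m : ℝ) + 3) * θ + θ := by ring
        have e2 : ((m : ℝ) + 2) * θ = ((m : ℝ) + 3) * θ - θ := by ring
        have e3 : ((m : ℝ) + 1 + 2) * θ = ((m : ℝ) + 3) * θ := by ring
        rw [e1, e2, e3, Real.sin_add, Real.sin_sub]
        ring
      have hswap : Real.sin θ * (4 * Real.cos θ ^ 2 * (p (m+1) (4 * Real.cos θ ^ 2) - p m (4 * Real.cos θ ^ 2))) =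
          4 * Real.cos θ ^ 2 * (Real.sin θ * p (m+1) (4 * Real.cos θ ^ 2)) -
          4 * Real.cos θ ^ 2 * (Real.sin θ * p m (4 * Real.cos θ ^ 2)) := by ring
      push_cast
      rw [hswap, ih1, ih2, hrec]
      push_cast
      ring
  
lemma pos_of_ge_four (x : ℝ) (hx : 4 ≤ x) : ∀ n : ℕ, 0 < p n x ∧ 2 * p n x ≤ p (n + 1) x := by
  intro n
  induction n with
  | zero =>
      constructor
      · simp only [p]; linarith
      · simp only [p]; nlinarith
  | succ m ih =>
      obtain ⟨h1, h2⟩ := ih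
      have h3 : 0 < p (m + 1) x := by linarith
      refine ⟨h3, ?_⟩
      show 2 * p (m + 1) x ≤ p (m + 2) x
      simp only [p]
      nlinarith

theorem stmt_3 (n : ℕ) :
    IsGreatest {x : ℝ | p n x = 0} (4 * Real.cos (Real.pi / ((n : ℝ) + 2)) ^ 2) := by
  set θ := Real.pi / ((n : ℝ) + 2) with hθdef
  have hn2 : (0 : ℝ) < (n : ℝ) + 2 := by positivity
  have hθpos : 0 < θ := div_pos Real.pi_pos hn2
  have hθle : θ ≤ Real.pi / 2 := by
    rw [hθdef]
    apply div_le_div_of_nonneg_left Real.pi_pos.le (by norm_num)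
    have := Nat.cast_nonneg (α := ℝ) n
    linarith
  have hθltpi : θ < Real.pi := lt_of_le_of_lt hθle (by linarith [Real.pi_pos])
  have hsθ : 0 < Real.sin θ := Real.sin_pos_of_pos_of_lt_pi hθpos hθltpi
  have hcθ : 0 ≤ Real.cos θ := Real.cos_nonneg_of_mem_Icc ⟨by linarith, hθle⟩
  have hmul : ((n : ℝ) + 2) * θ = Real.pi := by
    rw [hθdef]; field_simp
  constructor
  · -- membership
    have hk := key θ n
    rw [hmul, Real.sin_pi, mul_zero] at hk
    have := mul_eq_zero.mp hk
    rcases this with h | h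
    · exact absurd h (ne_of_gt hsθ)
    · exact h
  · -- upper bound
    rintro x (hx : p n x = 0)
    by_contra hlt
    push_neg at hlt
    -- hlt : 4 * cos θ ^ 2 < x
    rcases le_or_gt 4 x with h4 | h4
    · exact (ne_of_gt (pos_of_ge_four x h4 n).1) hx
    · -- 0 ≤ 4 cos²θ < x < 4
      have hx0 : 0 < x := lt_of_le_of_lt (by positivity) hlt
      set φ := Real.arccos (Real.sqrt x / 2) with hφdef
      have hsx2 : Real.sqrt x < 2 := by
        have : Real.sqrt x < Real.sqrt 4 := Real.sqrt_lt_sqrt hx0.le h4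
        simpa [show Real.sqrt 4 = 2 by
          rw [show (4:ℝ) = 2^2 by norm_num, Real.sqrt_sq (by norm_num)]] using this
      have harg0 : 0 ≤ Real.sqrt x / 2 := by positivity
      have harg1 : Real.sqrt x / 2 < 1 := by linarith
      have hcφ : Real.cos φ = Real.sqrt x / 2 :=
        Real.cos_arccos (by linarith) (by linarith)
      have hxφ : 4 * Real.cos φ ^ 2 = x := by
        rw [hcφ]
        rw [div_pow, Real.sq_sqrt hx0.le]
        ring
      have hφpos : 0 < φ := Real.arccos_pos.mpr harg1
      have hφle : φ ≤ Real.pi / 2 := Real.arccos_le_pi_div_two.mpr harg0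
      have hcφpos : 0 < Real.cos φ := by
        rw [hcφ]; positivity
      have hφlt : φ < θ := by
        by_contra hle
        push_neg at hle
        have hc2 : Real.cos θ ^ 2 < Real.cos φ ^ 2 := by nlinarith
        rcases eq_or_lt_of_le hle with heq | hlt2
        · rw [heq] at hc2; linarith
        · have := Real.strictAntiOn_cos ⟨by linarith, hθltpi.le⟩
            ⟨hφpos.le, by linarith⟩ hlt2
          nlinarith
      have hsφ : 0 < Real.sin φ := Real.sin_pos_of_pos_of_lt_pi hφpos (by linarith)
      have hangle : 0 < ((n : ℝ) + 2) * φ := by positivity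
      have hangle2 : ((n : ℝ) + 2) * φ < Real.pi := by
        rw [← hmul]
        exact (mul_lt_mul_iff_right₀ hn2).mpr hφlt
      have hsin2 : 0 < Real.sin (((n : ℝ) + 2) * φ) :=
        Real.sin_pos_of_pos_of_lt_pi hangle hangle2
      have hk := key φ n
      rw [hxφ, hx, mul_zero] at hk
      have : 0 < (2 * Real.cos φ) ^ (n + 1) * Real.sin (((n : ℝ) + 2) * φ) := by
        positivity
      linarith [this, hk.symm]
end

section
/- For all n ≥ 0, p_n(α_{n+1}) = α_{n+1}^{(n+1)/2}, where α_{n+1} = 4cos²(π/(n+3)). -/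
open Real Finset

lemma p_key (θ : ℝ) : ∀ m : ℕ,
    p m (4 * Real.cos θ ^ 2) * Real.sin θ
      = (2 * Real.cos θ) ^ (m + 1) * Real.sin (((m : ℝ) + 2) * θ) := by
  intro m
  induction m using Nat.twoStepInduction with
  | zero =>
    simp only [p]
    rw [show ((0:ℕ):ℝ) + 2 = 2 by norm_num, show (2:ℝ) * θ = θ + θ by ring,
      Real.sin_add]
    ring
  | one =>
    simp only [p]
    rw [show ((1:ℕ):ℝ) + 2 = 3 by norm_num, show (3:ℝ) * θ = (θ + θ) + θ by ring,
      Real.sin_add, Real.sin_add, Real.cos_add]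
    have hsc := Real.sin_sq_add_cos_sq θ
    linear_combination (4 * Real.cos θ ^ 2 * Real.sin θ) * hsc
  | more m ih1 ih2 =>
    show (4 * Real.cos θ ^ 2) * (p (m+1) _ - p m _) * Real.sin θ = _
    have e1 : (4 * Real.cos θ ^ 2) * (p (m+1) (4 * Real.cos θ ^ 2) - p m (4 * Real.cos θ ^ 2)) * Real.sin θ
        = (4 * Real.cos θ ^ 2) * ((p (m+1) (4 * Real.cos θ ^ 2) * Real.sin θ) - (p m (4 * Real.cos θ ^ 2) * Real.sin θ)) := by ring
    rw [e1, ih2, ih1]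
    have hs4 : Real.sin (((m : ℝ) + 2 + 2) * θ)
        = 2 * Real.cos θ * Real.sin (((m : ℝ) + 1 + 2) * θ) - Real.sin (((m : ℝ) + 2) * θ) := by
      have h1 : ((m : ℝ) + 2 + 2) * θ = ((m : ℝ) + 3) * θ + θ := by ring
      have h2 : ((m : ℝ) + 2) * θ = ((m : ℝ) + 3) * θ - θ := by ring
      have h3 : ((m : ℝ) + 1 + 2) * θ = ((m : ℝ) + 3) * θ := by ring
      rw [h1, h2, h3, Real.sin_add, Real.sin_sub]
      ring
    push_cast
    push_cast at hs4
    rw [hs4]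
    ring

theorem stmt_5 (n : ℕ) :
    p n (4 * Real.cos (Real.pi / ((n : ℝ) + 3)) ^ 2) =
      (4 * Real.cos (Real.pi / ((n : ℝ) + 3)) ^ 2) ^ (((n : ℝ) + 1) / 2) := by
  set θ : ℝ := Real.pi / ((n : ℝ) + 3) with hθ
  have hn3 : (0:ℝ) < (n : ℝ) + 3 := by positivity
  have hθpos : 0 < θ := by positivity
  have hθlt : θ < Real.pi / 2 := by
    rw [hθ, div_lt_div_iff₀ hn3 two_pos]
    nlinarith [Real.pi_pos]
  have hθltpi : θ < Real.pi := hθlt.trans (by linarith [Real.pi_pos])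
  have hsin : Real.sin θ ≠ 0 := ne_of_gt (Real.sin_pos_of_pos_of_lt_pi hθpos hθltpi)
  have hcos : 0 < Real.cos θ := Real.cos_pos_of_mem_Ioo ⟨by linarith, hθlt⟩
  have hkey := p_key θ n
  have hang : ((n : ℝ) + 2) * θ = Real.pi - θ := by
    rw [hθ]
    field_simp
    ring
  rw [hang, Real.sin_pi_sub] at hkey
  have hp : p n (4 * Real.cos θ ^ 2) = (2 * Real.cos θ) ^ (n + 1) := by
    exact mul_right_cancel₀ hsin hkey
  rw [hp]
  have h2c : (0:ℝ) ≤ 2 * Real.cos θ := by linarith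
  have : (4 * Real.cos θ ^ 2 : ℝ) = (2 * Real.cos θ) ^ (2:ℕ) := by ring
  rw [this, ← Real.rpow_natCast (2 * Real.cos θ) 2, ← Real.rpow_natCast (2 * Real.cos θ) (n+1),
    ← Real.rpow_mul h2c]
  norm_num
  ring_nf
end

section
/- For all n ≥ 0 and all real x with α_{n+1} < x < α_{n+2} (where α_m = 4cos²(π/(m+2))), we have p_{n+1}(x) < p_n(x). -/
open Real Finset

lemma trig_key (n : ℕ) (θ : ℝ) :
    Real.sin (((n : ℝ) + 4) * θ) =
      2 * Real.cos θ * Real.sin (((n : ℝ) + 3) * θ) - Real.sin (((n : ℝ) + 2) * θ) := by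
  have e1 : ((n : ℝ) + 4) * θ = ((n : ℝ) + 3) * θ + θ := by ring
  have e2 : ((n : ℝ) + 2) * θ = ((n : ℝ) + 3) * θ - θ := by ring
  rw [e1, e2, Real.sin_add, Real.sin_sub]
  ring

lemma p_formula : ∀ (n : ℕ) (θ : ℝ),
    p n (4 * Real.cos θ ^ 2) * Real.sin (2 * θ) =
      (2 * Real.cos θ) ^ (n + 2) * Real.sin (((n : ℝ) + 2) * θ)
  | 0, θ => by
    simp only [p]
    have e : (((0 : ℕ) : ℝ) + 2) * θ = 2 * θ := by norm_num
    rw [e]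
    ring
  | 1, θ => by
    simp only [p]
    have h2 : Real.sin (2 * θ) = 2 * Real.sin θ * Real.cos θ := Real.sin_two_mul θ
    have h3 : Real.sin (((1 : ℕ) : ℝ) + 2) = Real.sin 3 := by norm_num
    have e : (((1 : ℕ) : ℝ) + 2) * θ = 3 * θ := by norm_num
    rw [e, Real.sin_three_mul, h2]
    have hs := Real.sin_sq_add_cos_sq θ
    linear_combination (32 * Real.cos θ ^ 3 * Real.sin θ) * hs
  | (n+2), θ => by
    have hA := p_formula (n+1) θ
    have hB := p_formula n θ
    have key := trig_key n θ
    simp only [p]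
    push_cast at hA hB ⊢
    have e1 : ((n : ℝ) + 2 + 2) = (n : ℝ) + 4 := by ring
    have e2 : ((n : ℝ) + 1 + 2) * θ = ((n : ℝ) + 3) * θ := by ring
    rw [e1]
    rw [e2] at hA
    linear_combination 4 * Real.cos θ ^ 2 * hA - 4 * Real.cos θ ^ 2 * hB
      - (2 * Real.cos θ) ^ (n + 4) * key

set_option maxHeartbeats 1000000 in
theorem stmt_8 (n : ℕ) (x : ℝ)
    (h1 : 4 * Real.cos (Real.pi / ((n : ℝ) + 3)) ^ 2 < x)
    (h2 : x < 4 * Real.cos (Real.pi / ((n : ℝ) + 4)) ^ 2) :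
    p (n+1) x < p n x := by
  have hpi := Real.pi_pos
  have hn3 : (0:ℝ) < (n : ℝ) + 3 := by positivity
  have hn4 : (0:ℝ) < (n : ℝ) + 4 := by positivity
  -- bounds on the reference angles
  have ha_pos : 0 < Real.pi / ((n : ℝ) + 3) := by positivity
  have hb_pos : 0 < Real.pi / ((n : ℝ) + 4) := by positivity
  have ha_le : Real.pi / ((n : ℝ) + 3) ≤ Real.pi / 3 := by
    apply div_le_div_of_nonneg_left hpi.le (by norm_num)
    have : (0:ℝ) ≤ (n : ℝ) := Nat.cast_nonneg n
    linarith
  have ha_lt_half : Real.pi / ((n : ℝ) + 3) < Real.pi / 2 := by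
    have : Real.pi / 3 < Real.pi / 2 := by linarith
    linarith
  have hcos_a_pos : 0 < Real.cos (Real.pi / ((n : ℝ) + 3)) :=
    Real.cos_pos_of_mem_Ioo ⟨by linarith, ha_lt_half⟩
  have hcos_a_nonneg := hcos_a_pos.le
  have hcos_b_nonneg : 0 ≤ Real.cos (Real.pi / ((n : ℝ) + 4)) := by
    apply Real.cos_nonneg_of_mem_Icc
    constructor
    · linarith
    · have : Real.pi / ((n : ℝ) + 4) ≤ Real.pi / ((n : ℝ) + 3) := by
        apply div_le_div_of_nonneg_left hpi.le hn3
        linarith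
      linarith
  have hx0 : 0 < x := by nlinarith
  have hx4 : x < 4 := by
    have := Real.cos_sq_le_one (Real.pi / ((n : ℝ) + 4))
    nlinarith
  -- define θ
  set θ := Real.arccos (Real.sqrt x / 2) with hθdef
  have hsx_pos : 0 < Real.sqrt x := Real.sqrt_pos.mpr hx0
  have hsx_lt : Real.sqrt x < 2 := by
    have h4 : Real.sqrt x < Real.sqrt 4 := (Real.sqrt_lt_sqrt hx0.le hx4)
    have : Real.sqrt 4 = 2 := by
      rw [show (4:ℝ) = 2^2 by norm_num, Real.sqrt_sq (by norm_num : (0:ℝ) ≤ 2)]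
    linarith
  have hcosθ : Real.cos θ = Real.sqrt x / 2 := by
    rw [hθdef, Real.cos_arccos (by linarith) (by linarith)]
  have hcosθ_pos : 0 < Real.cos θ := by rw [hcosθ]; linarith
  have hxeq : 4 * Real.cos θ ^ 2 = x := by
    rw [hcosθ]
    have := Real.sq_sqrt hx0.le
    ring_nf
    nlinarith [Real.sq_sqrt hx0.le]
  have hθ_mem : θ ∈ Set.Icc 0 Real.pi := ⟨Real.arccos_nonneg _, Real.arccos_le_pi _⟩
  -- θ < π/(n+3)
  have hθ_lt : θ < Real.pi / ((n : ℝ) + 3) := by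
    by_contra hcon
    push_neg at hcon
    have := Real.cos_le_cos_of_nonneg_of_le_pi ha_pos.le hθ_mem.2 hcon
    nlinarith
  -- π/(n+4) < θ
  have hb_le_pi : Real.pi / ((n : ℝ) + 4) ≤ Real.pi :=
    div_le_self hpi.le (by linarith [Nat.cast_nonneg (α := ℝ) n])
  have hθ_gt : Real.pi / ((n : ℝ) + 4) < θ := by
    by_contra hcon
    push_neg at hcon
    have := Real.cos_le_cos_of_nonneg_of_le_pi hθ_mem.1 hb_le_pi hcon
    nlinarith
  have hθ_pos : 0 < θ := lt_trans hb_pos hθ_gt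
  have hθ_small : θ < Real.pi / 3 := lt_of_lt_of_le hθ_lt ha_le
  -- sin(2θ) > 0
  have hsin2 : 0 < Real.sin (2 * θ) :=
    Real.sin_pos_of_pos_of_lt_pi (by linarith) (by linarith)
  -- sin((n+4)θ) < 0
  have hy_gt : Real.pi < ((n : ℝ) + 4) * θ := by
    rw [div_lt_iff₀ hn4] at hθ_gt
    linarith [hθ_gt]
  have hy_lt : ((n : ℝ) + 4) * θ < 2 * Real.pi := by
    have h3 : ((n : ℝ) + 3) * θ < Real.pi := by
      rw [lt_div_iff₀ hn3] at hθ_lt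
      linarith [hθ_lt]
    have e : ((n : ℝ) + 4) * θ = ((n : ℝ) + 3) * θ + θ := by ring
    rw [e]
    linarith
  have hneg : Real.sin (((n : ℝ) + 4) * θ) < 0 := by
    have hp : 0 < Real.sin (((n : ℝ) + 4) * θ - Real.pi) :=
      Real.sin_pos_of_pos_of_lt_pi (by linarith) (by linarith)
    rw [Real.sin_sub_pi] at hp
    linarith
  -- use the closed formula
  have hA := p_formula (n+1) θ
  have hB := p_formula n θ
  rw [hxeq] at hA hB
  push_cast at hA
  have e2 : ((n : ℝ) + 1 + 2) * θ = ((n : ℝ) + 3) * θ := by ring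
  rw [e2] at hA
  have key := trig_key n θ
  have hdiff : p (n+1) x * Real.sin (2*θ) - p n x * Real.sin (2*θ)
      = (2 * Real.cos θ) ^ (n + 2) * Real.sin (((n : ℝ) + 4) * θ) := by
    rw [hA, hB, key]
    ring
  have hpow : 0 < (2 * Real.cos θ) ^ (n + 2) := pow_pos (by linarith) _
  have hlt : p (n+1) x * Real.sin (2*θ) < p n x * Real.sin (2*θ) := by
    have := mul_neg_of_pos_of_neg hpow hneg
    linarith [hdiff, this]
  exact lt_of_mul_lt_mul_right hlt hsin2.le
end

section
/- For all n ≥ 0 and all real t with 0 < t < α_n = 4cos²(π/(n+2)) and p_n(t) > 0, there exists an integer i with 0 ≤ i < n such that p_i(t) < 0. -/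
open Real Finset

lemma p_closed (θ : ℝ) : ∀ n : ℕ, p n (4 * Real.cos θ ^ 2) * Real.sin θ
    = (2 * Real.cos θ) ^ (n + 1) * Real.sin (((n : ℝ) + 2) * θ) := by
  intro n
  induction n using Nat.twoStepInduction with
  | zero => -- zero
    have h2 : ((0 : ℕ) : ℝ) + 2 = 2 := by norm_num
    rw [h2]
    have hsin : Real.sin (2 * θ) = 2 * Real.sin θ * Real.cos θ := by
      rw [Real.sin_two_mul]
    rw [hsin]
    simp only [p]; ring
  | one =>
    have h3 : ((1 : ℕ) : ℝ) + 2 = 3 := by norm_num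
    rw [h3, Real.sin_three_mul]
    have hsc := Real.sin_sq_add_cos_sq θ
    simp only [p]
    linear_combination (16 * Real.cos θ ^ 2 * Real.sin θ) * hsc
  | more n ih0 ih1 =>
    have e2 : ((n : ℝ) + 2) * θ = ((n : ℝ) + 3) * θ - θ := by ring
    have e3 : (((n + 1 : ℕ) : ℝ) + 2) * θ = ((n : ℝ) + 3) * θ := by push_cast; ring
    rw [e3] at ih1
    rw [e2, Real.sin_sub] at ih0
    have hcast : (((n + 2 : ℕ) : ℝ) + 2) * θ = ((n : ℝ) + 3) * θ + θ := by push_cast; ring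
    rw [hcast, Real.sin_add]
    show (4 * Real.cos θ ^ 2) * (p (n + 1) (4 * Real.cos θ ^ 2) - p n (4 * Real.cos θ ^ 2)) *
      Real.sin θ = _
    linear_combination (4 * Real.cos θ ^ 2) * ih1 - (4 * Real.cos θ ^ 2) * ih0

set_option maxHeartbeats 1000000 in
theorem stmt_9 (n : ℕ) (t : ℝ)
    (h0 : 0 < t) (h1 : t < 4 * Real.cos (Real.pi / ((n : ℝ) + 2)) ^ 2)
    (h2 : p n t > 0) :
    ∃ i : ℕ, i < n ∧ p i t < 0 := by
  set β := Real.pi / ((n : ℝ) + 2) with hβ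
  have hn2 : (0 : ℝ) < (n : ℝ) + 2 := by positivity
  have hβpos : 0 < β := div_pos Real.pi_pos hn2
  have hβle : β ≤ Real.pi / 2 := by
    rw [hβ, div_le_div_iff₀ hn2 two_pos]
    nlinarith [Real.pi_pos, Nat.cast_nonneg (α := ℝ) n]
  have hcosβ : 0 ≤ Real.cos β := Real.cos_nonneg_of_mem_Icc ⟨by linarith, hβle⟩
  have ht4 : t < 4 := by nlinarith [Real.neg_one_le_cos β, Real.cos_le_one β]
  set s := Real.sqrt t with hs
  have hs0 : 0 < s := Real.sqrt_pos.2 h0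
  have hs2 : s < 2 := by
    have hsq : s ^ 2 < 2 ^ 2 := by rw [Real.sq_sqrt h0.le]; norm_num [ht4]
    nlinarith
  set θ := Real.arccos (s / 2) with hθdef
  have hcosθ : Real.cos θ = s / 2 := Real.cos_arccos (by linarith) (by linarith)
  have hθ0 : 0 < θ := Real.arccos_pos.2 (by linarith)
  have hθpi2 : θ ≤ Real.pi / 2 := by
    rw [hθdef, Real.arccos_le_pi_div_two]
    positivity
  have hθpi : θ < Real.pi := lt_of_le_of_lt hθpi2 (by linarith [Real.pi_pos])
  have hsinθ : 0 < Real.sin θ := Real.sin_pos_of_pos_of_lt_pi hθ0 hθpi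
  have ht : t = 4 * Real.cos θ ^ 2 := by
    rw [hcosθ, div_pow, Real.sq_sqrt h0.le]; ring
  have hcθ : 0 < Real.cos θ := by rw [hcosθ]; positivity
  -- θ > β
  have hθβ : β < θ := by
    by_contra hcon
    push_neg at hcon
    have hle := Real.cos_le_cos_of_nonneg_of_le_pi hθ0.le (by linarith [Real.pi_pos] : β ≤ Real.pi) hcon
    nlinarith [hcosβ]
  -- sin ((n+2)θ) > 0
  have hsin_n : 0 < Real.sin (((n : ℝ) + 2) * θ) := by
    have h := p_closed θ n
    rw [← ht] at h
    have hpos : 0 < p n t * Real.sin θ := mul_pos h2 hsinθ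
    rw [h] at hpos
    by_contra hc
    push_neg at hc
    nlinarith [pow_pos (by positivity : (0 : ℝ) < 2 * Real.cos θ) (n + 1)]
  -- minimal m with π < m θ
  have hex : ∃ k : ℕ, Real.pi < (k : ℝ) * θ := by
    obtain ⟨K, hK⟩ := exists_nat_gt (Real.pi / θ)
    exact ⟨K, by rwa [div_lt_iff₀ hθ0] at hK⟩
  set m := Nat.find hex with hmdef
  have hm : Real.pi < (m : ℝ) * θ := Nat.find_spec hex
  have hm_le : m ≤ n + 2 := by
    apply Nat.find_le
    have hpi_eq : Real.pi = ((n : ℝ) + 2) * β := by rw [hβ]; field_simp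
    push_cast
    calc Real.pi = ((n : ℝ) + 2) * β := hpi_eq
    _ < ((n : ℝ) + 2) * θ := by nlinarith
  have hm3 : 3 ≤ m := by
    by_contra hcon
    push_neg at hcon
    have hm2 : (m : ℝ) ≤ 2 := by exact_mod_cast Nat.lt_succ_iff.mp hcon
    nlinarith [Real.pi_pos]
  have hprev : ((m - 1 : ℕ) : ℝ) * θ ≤ Real.pi := by
    have := Nat.find_min hex (m := m - 1) (by omega)
    linarith [not_lt.mp this]
  have hcast1 : ((m - 1 : ℕ) : ℝ) = (m : ℝ) - 1 := by
    have : 1 ≤ m := by omega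
    push_cast [this]; ring
  rw [hcast1] at hprev
  have hm2pi : (m : ℝ) * θ < 2 * Real.pi := by nlinarith [Real.pi_pos]
  have hsinm : Real.sin ((m : ℝ) * θ) < 0 := by
    have hpos : 0 < Real.sin ((m : ℝ) * θ - Real.pi) :=
      Real.sin_pos_of_pos_of_lt_pi (by linarith) (by linarith)
    rw [Real.sin_sub_pi] at hpos
    linarith
  have hmne : m ≠ n + 2 := by
    intro heq
    rw [heq] at hsinm
    push_cast at hsinm
    linarith
  have hmn1 : m ≤ n + 1 := by omega
  refine ⟨m - 2, by omega, ?_⟩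
  have h := p_closed θ (m - 2)
  rw [← ht] at h
  have hcast2 : (((m - 2 : ℕ) : ℝ) + 2) * θ = (m : ℝ) * θ := by
    have : 2 ≤ m := by omega
    push_cast [this]; ring
  rw [hcast2] at h
  nlinarith [pow_pos (by positivity : (0 : ℝ) < 2 * Real.cos θ) (m - 2 + 1), hsinθ]
end
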